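/- Every smooth (C^∞) function f : C̃_1(V) × C̃_2(V) × ⋯ × C̃_r(V) → ℝ that is invariant under the diagonal action of GL(V) is constant. -/

import Mathlib

open scoped BigOperators

/-- The space `C̃_m(V)` of symmetric normal tensors of order `m`: `(m+2)`-multilinear
maps `T : V^{m+2} → V` that are symmetric in their first two arguments, symmetric in
their last `m` arguments, and whose total symmetrization vanishes. -/
def SymNormalTensor (V : Type*) [NormedAddCommGroup V] [NormedSpace ℝ V] (m : ℕ) :
    Submodule ℝ (ContinuousMultilinearMap ℝ (fun _ : Fin (m + 2) => V) V) where
  carrier := {T |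
    (∀ v : Fin (m + 2) → V, T (fun i => v (Equiv.swap 0 1 i)) = T v) ∧
    (∀ (v : Fin (m + 2) → V) (σ : Equiv.Perm (Fin (m + 2))),
        (∀ i : Fin (m + 2), (i : ℕ) < 2 → σ i = i) → T (fun i => v (σ i)) = T v) ∧
    (∀ v : Fin (m + 2) → V,
        ∑ σ : Equiv.Perm (Fin (m + 2)), T (fun i => v (σ i)) = 0)}
  add_mem' := by
    rintro a b ⟨ha0, ha1, ha2⟩ ⟨hb0, hb1, hb2⟩
    refine ⟨fun v => ?_, fun v σ hσ => ?_, fun v => ?_⟩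
    · simp [ha0 v, hb0 v]
    · simp [ha1 v σ hσ, hb1 v σ hσ]
    · simp [Finset.sum_add_distrib, ha2 v, hb2 v]
  zero_mem' := by
    refine ⟨fun v => ?_, fun v σ hσ => ?_, fun v => ?_⟩ <;> simp
  smul_mem' := by
    rintro c a ⟨ha0, ha1, ha2⟩
    refine ⟨fun v => ?_, fun v σ hσ => ?_, fun v => ?_⟩
    · simp [ha0 v]
    · simp [ha1 v σ hσ]
    · simp [← Finset.smul_sum, ha2 v]


/-- Scalar multiplication by a nonzero real as a linear equivalence. -/
noncomputable def smulEquivAux {V : Type*} [NormedAddCommGroup V] [NormedSpace ℝ V]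
    (t : ℝ) (ht : t ≠ 0) : V ≃ₗ[ℝ] V where
  toFun x := t • x
  invFun x := t⁻¹ • x
  map_add' := smul_add t
  map_smul' c x := smul_comm t c x
  left_inv x := by simp [smul_smul, inv_mul_cancel₀ ht]
  right_inv x := by simp [smul_smul, mul_inv_cancel₀ ht]

set_option synthInstance.maxHeartbeats 800000 in
set_option maxHeartbeats 4000000 in
/-- Every smooth function on `C̃_1(V) × ⋯ × C̃_r(V)` invariant under the diagonal
action of `GL(V)` is constant. -/
theorem smooth_invariant_function_on_sym_normal_tensors_is_constant
    {V : Type*} [NormedAddCommGroup V] [NormedSpace ℝ V] [FiniteDimensional ℝ V]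
    (r : ℕ) (hr : 1 ≤ r)
    (f : (∀ m : Fin r, SymNormalTensor V ((m : ℕ) + 1)) → ℝ)
    (hf : @ContDiff ℝ _ _ _ Pi.normedSpace _ _ _ ⊤ f)
    (hinv : ∀ (g : V ≃ₗ[ℝ] V) (T T' : ∀ m : Fin r, SymNormalTensor V ((m : ℕ) + 1)),
      (∀ (m : Fin r) (v : Fin ((m : ℕ) + 1 + 2) → V),
          (T' m).1 v = g ((T m).1 fun i => g.symm (v i))) →
      f T' = f T) :
    ∃ c : ℝ, ∀ T, f T = c := by
  refine ⟨f 0, fun T => ?_⟩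
  set φ : ℝ → (∀ m : Fin r, SymNormalTensor V ((m : ℕ) + 1)) :=
    fun t m => (t ^ ((m : ℕ) + 2)) • T m with hφ
  have hφ0 : φ 0 = 0 := by
    funext m
    simp [φ]
  have hφcont : Continuous φ := by
    apply continuous_pi
    intro m
    exact (continuous_pow _).smul continuous_const
  have key : ∀ t : ℝ, t ≠ 0 → f (φ t) = f T := by
    intro t ht
    refine hinv (smulEquivAux t ht).symm T (φ t) (fun m v => ?_)
    have h1 := (T m).1.map_smul_univ (fun _ : Fin ((m : ℕ) + 1 + 2) => t) v
    have h2 : (φ t m).1 v = (t ^ ((m : ℕ) + 2)) • (T m).1 v := rfl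
    have h3 : (smulEquivAux t ht).symm ((T m).1 fun i =>
        ((smulEquivAux t ht).symm).symm (v i))
        = t⁻¹ • (T m).1 (fun i => t • v i) := rfl
    rw [h2, h3, h1, Finset.prod_const, smul_smul, Finset.card_univ, Fintype.card_fin]
    congr 1
    field_simp
    ring
  have h2 : Filter.Tendsto (f ∘ φ) (nhdsWithin 0 {0}ᶜ) (nhds (f (φ 0))) :=
    (((by letI : NormedSpace ℝ (∀ m : Fin r, SymNormalTensor V ((m : ℕ) + 1)) := Pi.normedSpace; exact hf.continuous : Continuous f).comp hφcont).tendsto 0).mono_left nhdsWithin_le_nhds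
  have h3 : Filter.Tendsto (f ∘ φ) (nhdsWithin 0 {0}ᶜ) (nhds (f T)) := by
    refine Filter.Tendsto.congr' ?_ tendsto_const_nhds
    filter_upwards [self_mem_nhdsWithin] with t ht
    exact (key t ht).symm
  have h4 := tendsto_nhds_unique h3 h2
  rw [hφ0] at h4
  exact h4
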